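/- Let {x_n}, {y_n}, {z_n} be complex sequences indexed by nonzero integers satisfying the trilinear system and parity, with |x_1| = 1, y_1 ≠ 0, z_1 ≠ 0. Then x_n·y_n·z_n ≠ 0 for all n > 0. -/

import Mathlib

open Complex

section Aux

variable (x y z : ℤ → ℂ)
variable (hsys : ∀ n1 n2 : ℤ, n1 ≠ 0 → n2 ≠ 0 → n1 + n2 ≠ 0 →
      x n1 * y n2 - x (n1 + n2) * z n2 + y (n1 + n2) * z (-n1) = 0)
variable (hpar : ∀ n : ℤ, x (-n) = (starRingEnd ℂ) (x n) ∧ y (-n) = (starRingEnd ℂ) (y n) ∧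
      z (-n) = (starRingEnd ℂ) (z n))

include hsys hpar

lemma keyJ (s : ℤ) (hs : 1 ≤ s) :
    (normSq (x s) - normSq (y s)) * (normSq (z (s+1)) - normSq (z 1)) =
      normSq (y (s+1)) * normSq (x 1) - normSq (x (s+1)) * normSq (y 1) := by
  have e1 : (starRingEnd ℂ) (x 1) * y (s+1) - x s * z (s+1) + y s * z 1 = 0 := by
    have h := hsys (-1) (s+1) (by norm_num) (by omega) (by omega)
    rw [show (-1 : ℤ) + (s+1) = s by ring] at h
    simp only [neg_neg] at h
    rw [(hpar 1).1] at h
    exact h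
  have e2 : x (s+1) * (starRingEnd ℂ) (y 1) - x s * (starRingEnd ℂ) (z 1)
      + y s * (starRingEnd ℂ) (z (s+1)) = 0 := by
    have h := hsys (s+1) (-1) (by omega) (by norm_num) (by omega)
    rw [show (s+1) + (-1 : ℤ) = s by ring] at h
    rw [(hpar 1).2.1, (hpar 1).2.2, (hpar (s+1)).2.2] at h
    exact h
  have e3 : x 1 * (starRingEnd ℂ) (y (s+1)) - (starRingEnd ℂ) (x s) * (starRingEnd ℂ) (z (s+1))
      + (starRingEnd ℂ) (y s) * (starRingEnd ℂ) (z 1) = 0 := by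
    have h := hsys 1 (-(s+1)) (by norm_num) (by omega) (by omega)
    rw [show (1 : ℤ) + -(s+1) = -s by ring] at h
    rw [(hpar (s+1)).2.1, (hpar (s+1)).2.2, (hpar s).1, (hpar s).2.1, (hpar 1).2.2] at h
    exact h
  have e4 : (starRingEnd ℂ) (x (s+1)) * y 1 - (starRingEnd ℂ) (x s) * z 1
      + (starRingEnd ℂ) (y s) * z (s+1) = 0 := by
    have h := hsys (-(s+1)) 1 (by omega) (by norm_num) (by omega)
    rw [show -(s+1) + (1 : ℤ) = -s by ring] at h
    simp only [neg_neg] at h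
    rw [(hpar (s+1)).1, (hpar s).1, (hpar s).2.1] at h
    exact h
  have key : ((normSq (x s) : ℂ) - normSq (y s)) * ((normSq (z (s+1)) : ℂ) - normSq (z 1)) =
      (normSq (y (s+1)) : ℂ) * normSq (x 1) - (normSq (x (s+1)) : ℂ) * normSq (y 1) := by
    simp only [← Complex.mul_conj]
    linear_combination (-(x 1 * (starRingEnd ℂ) (y (s+1)))) * e1
      + ((starRingEnd ℂ) (x (s+1)) * y 1) * e2
      + (-(x s * z (s+1) - y s * z 1)) * e3
      + (x s * (starRingEnd ℂ) (z 1) - y s * (starRingEnd ℂ) (z (s+1))) * e4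
  exact_mod_cast key

lemma keyM (s : ℤ) (hs : 1 ≤ s) :
    (normSq (z s) - normSq (y s)) * (normSq (x (s+1)) - normSq (x 1)) =
      normSq (y (s+1)) * normSq (z 1) - normSq (y 1) * normSq (z (s+1)) := by
  have g1 : x 1 * y s - x (s+1) * z s + y (s+1) * (starRingEnd ℂ) (z 1) = 0 := by
    have h := hsys 1 s (by norm_num) (by omega) (by omega)
    rw [show (1 : ℤ) + s = s + 1 by ring, (hpar 1).2.2] at h
    exact h
  have g2 : (starRingEnd ℂ) (x (s+1)) * y s - (starRingEnd ℂ) (x 1) * z s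
      + (starRingEnd ℂ) (y 1) * z (s+1) = 0 := by
    have h := hsys (-(s+1)) s (by omega) (by omega) (by omega)
    rw [show -(s+1) + s = -(1:ℤ) by ring] at h
    simp only [neg_neg] at h
    rw [(hpar (s+1)).1, (hpar 1).1, (hpar 1).2.1] at h
    exact h
  have g3 : (starRingEnd ℂ) (x 1) * (starRingEnd ℂ) (y s) - (starRingEnd ℂ) (x (s+1)) * (starRingEnd ℂ) (z s)
      + (starRingEnd ℂ) (y (s+1)) * z 1 = 0 := by
    have h := hsys (-1) (-s) (by norm_num) (by omega) (by omega)
    rw [show (-1 : ℤ) + -s = -(s+1) by ring] at h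
    simp only [neg_neg] at h
    rw [(hpar 1).1, (hpar s).2.1, (hpar (s+1)).1, (hpar s).2.2, (hpar (s+1)).2.1] at h
    exact h
  have g4 : x (s+1) * (starRingEnd ℂ) (y s) - x 1 * (starRingEnd ℂ) (z s)
      + y 1 * (starRingEnd ℂ) (z (s+1)) = 0 := by
    have h := hsys (s+1) (-s) (by omega) (by omega) (by norm_num)
    rw [show (s+1) + -s = (1:ℤ) by ring] at h
    rw [(hpar s).2.1, (hpar s).2.2, (hpar (s+1)).2.2] at h
    exact h
  have key : ((normSq (z s) : ℂ) - normSq (y s)) * ((normSq (x (s+1)) : ℂ) - normSq (x 1)) =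
      (normSq (y (s+1)) : ℂ) * normSq (z 1) - (normSq (y 1) : ℂ) * normSq (z (s+1)) := by
    simp only [← Complex.mul_conj]
    linear_combination (-((starRingEnd ℂ) (y (s+1)) * z 1)) * g1
      + (y 1 * (starRingEnd ℂ) (z (s+1))) * g2
      + (-(x (s+1) * z s - x 1 * y s)) * g3
      + ((starRingEnd ℂ) (x 1) * z s - (starRingEnd ℂ) (x (s+1)) * y s) * g4
  exact_mod_cast key

lemma keyQ (s : ℤ) (hs : 1 ≤ s) :
    (normSq (x s) - normSq (z s)) * (normSq (y 1) - normSq (y (s+1))) =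
      normSq (x (s+1)) * normSq (z 1) - normSq (x 1) * normSq (z (s+1)) := by
  have k1 : x s * y 1 - x (s+1) * z 1 + y (s+1) * (starRingEnd ℂ) (z s) = 0 := by
    have h := hsys s 1 (by omega) (by norm_num) (by omega)
    rw [(hpar s).2.2] at h
    exact h
  have k2 : x s * (starRingEnd ℂ) (y (s+1)) - (starRingEnd ℂ) (x 1) * (starRingEnd ℂ) (z (s+1))
      + (starRingEnd ℂ) (y 1) * (starRingEnd ℂ) (z s) = 0 := by
    have h := hsys s (-(s+1)) (by omega) (by omega) (by omega)
    rw [show s + -(s+1) = -(1:ℤ) by ring] at h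
    rw [(hpar (s+1)).2.1, (hpar 1).1, (hpar (s+1)).2.2, (hpar 1).2.1, (hpar s).2.2] at h
    exact h
  have k3 : (starRingEnd ℂ) (x s) * (starRingEnd ℂ) (y 1) - (starRingEnd ℂ) (x (s+1)) * (starRingEnd ℂ) (z 1)
      + (starRingEnd ℂ) (y (s+1)) * z s = 0 := by
    have h := hsys (-s) (-1) (by omega) (by norm_num) (by omega)
    rw [show -s + -(1:ℤ) = -(s+1) by ring] at h
    simp only [neg_neg] at h
    rw [(hpar s).1, (hpar 1).2.1, (hpar (s+1)).1, (hpar 1).2.2, (hpar (s+1)).2.1] at h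
    exact h
  have k4 : (starRingEnd ℂ) (x s) * y (s+1) - x 1 * z (s+1) + y 1 * z s = 0 := by
    have h := hsys (-s) (s+1) (by omega) (by omega) (by norm_num)
    rw [show -s + (s+1) = (1:ℤ) by ring] at h
    simp only [neg_neg] at h
    rw [(hpar s).1] at h
    exact h
  have key : ((normSq (x s) : ℂ) - normSq (z s)) * ((normSq (y 1) : ℂ) - normSq (y (s+1))) =
      (normSq (x (s+1)) : ℂ) * normSq (z 1) - (normSq (x 1) : ℂ) * normSq (z (s+1)) := by
    simp only [← Complex.mul_conj]
    linear_combination ((starRingEnd ℂ) (x s) * (starRingEnd ℂ) (y 1) + (starRingEnd ℂ) (y (s+1)) * z s) * k1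
      + (-((starRingEnd ℂ) (x s) * y (s+1) + y 1 * z s)) * k2
      + (x (s+1) * z 1) * k3
      + (-((starRingEnd ℂ) (x 1) * (starRingEnd ℂ) (z (s+1)))) * k4
  exact_mod_cast key

lemma keyInv (hx1 : normSq (x 1) = 1) (hz1 : z 1 ≠ 0) :
    ∀ s : ℤ, 1 ≤ s →
      normSq (x s) - normSq (y s) = 1 - normSq (y 1) ∧
      normSq (z s) - normSq (y s) = normSq (z 1) - normSq (y 1) := by
  refine Int.le_induction ?_ ?_
  · exact ⟨by rw [hx1], rfl⟩
  · intro n hn ih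
    obtain ⟨ih1, ih2⟩ := ih
    have hJ := keyJ x y z hsys hpar n hn
    have hM := keyM x y z hsys hpar n hn
    have hQ := keyQ x y z hsys hpar n hn
    rw [hx1] at hJ hM hQ
    set B1 := normSq (y 1)
    set C1 := normSq (z 1)
    set a := normSq (x (n+1))
    set b := normSq (y (n+1))
    set c := normSq (z (n+1))
    have hC1 : 0 < C1 := normSq_pos.2 hz1
    -- rearranged forms
    have h1 : (a - b - (1 - B1)) * C1 = c - b - (C1 - B1) := by
      have hAC : normSq (x n) - normSq (z n) = 1 - C1 := by linarith
      linear_combination -hQ - (b - B1) * hAC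
    have h2 : (1 - B1) * (c - b - (C1 - B1)) = -(a - b - (1 - B1)) * B1 := by
      linear_combination hJ - (c - C1) * ih1
    have h3 : (C1 - B1) * (a - b - (1 - B1)) = -B1 * (c - b - (C1 - B1)) := by
      linear_combination hM - (a - 1) * ih2
    have h4 : (a - b - (1 - B1)) * (2 * C1) = 0 := by linear_combination h2 + h3 + (1 - B1) * h1 + B1 * h1
    have hα : a - b - (1 - B1) = 0 := by
      rcases mul_eq_zero.1 h4 with h | h
      · exact h
      · linarith
    have hγ : c - b - (C1 - B1) = 0 := by
      rw [hα] at h1; linarith [h1]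
    constructor <;> linarith

end Aux

theorem stmt_12 (x y z : ℤ → ℂ)
    (hsys : ∀ n1 n2 : ℤ, n1 ≠ 0 → n2 ≠ 0 → n1 + n2 ≠ 0 →
      x n1 * y n2 - x (n1 + n2) * z n2 + y (n1 + n2) * z (-n1) = 0)
    (hpar : ∀ n : ℤ, x (-n) = (starRingEnd ℂ) (x n) ∧ y (-n) = (starRingEnd ℂ) (y n) ∧
      z (-n) = (starRingEnd ℂ) (z n))
    (hx1 : ‖x 1‖ = 1) (hy1 : y 1 ≠ 0) (hz1 : z 1 ≠ 0) :
    ∀ n : ℤ, 0 < n → x n * y n * z n ≠ 0 := by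
  have hx1' : normSq (x 1) = 1 := by rw [← Complex.sq_norm, hx1]; norm_num
  have hinv := keyInv x y z hsys hpar hx1' hz1
  have hx1ne : x 1 ≠ 0 := by
    intro h; rw [h] at hx1; simp at hx1
  have main : ∀ n : ℤ, 1 ≤ n → x n ≠ 0 ∧ y n ≠ 0 ∧ z n ≠ 0 := by
    refine Int.le_induction ?_ ?_
    · exact ⟨hx1ne, hy1, hz1⟩
    · intro s hs ih
      obtain ⟨hxs, hys, hzs⟩ := ih
      set m := s + 1 with hm
      -- helper: from x(m+m) * z m = y(m+m) * conj(z m) and z m ≠ 0, get normSq x(m+m) = normSq y(m+m)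
      have hmm : 1 ≤ m + m := by omega
      -- step 1 : y m ≠ 0
      have hym : y m ≠ 0 := by
        intro hy
        by_cases hzm : z m = 0
        · -- eq (-1, m): conj(x1) y m - x s z m + y s z 1 = 0
          have h := hsys (-1) m (by norm_num) (by omega) (by omega)
          rw [show (-1 : ℤ) + m = s by omega] at h
          simp only [neg_neg] at h
          rw [hy, hzm] at h
          simp at h
          rcases h with h | h
          · exact hys h
          · exact hz1 h
        · -- eq (m, m)
          have h := hsys m m (by omega) (by omega) (by omega)
          rw [(hpar m).2.2, hy] at h
          have h' : x (m + m) * z m = y (m + m) * (starRingEnd ℂ) (z m) := by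
            linear_combination -h
          have habs := congrArg normSq h'
          simp only [normSq_mul, normSq_conj] at habs
          have hne : normSq (z m) ≠ 0 := fun h => hzm (normSq_eq_zero.1 h)
          have hns : normSq (x (m+m)) = normSq (y (m+m)) :=
            mul_right_cancel₀ hne habs
          have hinvmm := (hinv (m+m) hmm).1
          have hB1 : normSq (y 1) = 1 := by rw [hns] at hinvmm; linarith
          have hinvm := (hinv m (by omega)).1
          have hxm0 : normSq (x m) = 0 := by
            rw [hy] at hinvm; simp at hinvm; rw [hB1] at hinvm; linarith
          have hxm : x m = 0 := normSq_eq_zero.1 hxm0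
          -- eq (s, 1)
          have h2 := hsys s 1 (by omega) (by norm_num) (by omega)
          rw [show s + (1:ℤ) = m by omega, hxm, hy] at h2
          simp at h2
          rcases h2 with h2 | h2
          · exact hxs h2
          · exact hy1 h2
      -- step 2 : z m ≠ 0
      have hzm : z m ≠ 0 := by
        intro hz
        -- eq (m, m): x m y m = x(2m) z m - y(2m) conj(z m) = 0
        have h := hsys m m (by omega) (by omega) (by omega)
        rw [(hpar m).2.2, hz] at h
        simp at h
        have hxm : x m = 0 := by
          rcases h with h | h
          · exact h
          · exact absurd h hym
        -- eq (m, -1): x m conj(y 1) - x s conj(z 1) + y s conj(z m) = 0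
        have h2 := hsys m (-1) (by omega) (by norm_num) (by omega)
        rw [show m + (-1 : ℤ) = s by omega] at h2
        rw [(hpar 1).2.1, (hpar 1).2.2, (hpar m).2.2, hxm, hz] at h2
        simp at h2
        rcases h2 with h2 | h2
        · exact hxs h2
        · exact hz1 h2
      -- step 3 : x m ≠ 0
      have hxm : x m ≠ 0 := by
        intro hx
        -- eq (2m, -m): x(2m) conj(y m) - x m conj(z m)·? + y m conj(z 2m) = 0
        have h := hsys (m + m) (-m) (by omega) (by omega) (by omega)
        rw [show (m + m) + -m = m by ring] at h
        rw [(hpar m).2.1, (hpar (m+m)).2.2, hx] at h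
        simp only [zero_mul, sub_zero, mul_zero, zero_sub] at h
        have h' : x (m+m) * (starRingEnd ℂ) (y m) = -(y m * (starRingEnd ℂ) (z (m+m))) := by
          linear_combination h
        have habs := congrArg normSq h'
        simp only [normSq_mul, normSq_conj, normSq_neg] at habs
        have hne : normSq (y m) ≠ 0 := fun h => hym (normSq_eq_zero.1 h)
        have hns : normSq (x (m+m)) = normSq (z (m+m)) := by
          have : normSq (x (m+m)) * normSq (y m) = normSq (y m) * normSq (z (m+m)) := habs
          rw [mul_comm (normSq (y m))] at this
          exact mul_right_cancel₀ hne this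
        have hi1 := (hinv (m+m) hmm).1
        have hi2 := (hinv (m+m) hmm).2
        have hC1 : normSq (z 1) = 1 := by rw [hns] at hi1; linarith
        have hm1 := (hinv m (by omega)).1
        have hm2 := (hinv m (by omega)).2
        have hxm0 : normSq (x m) = 0 := by rw [hx]; simp
        have hzm0 : normSq (z m) = 0 := by rw [hC1] at hm2; linarith
        exact hzm (normSq_eq_zero.1 hzm0)
      exact ⟨hxm, hym, hzm⟩
  intro n hn
  obtain ⟨h1, h2, h3⟩ := main n (by omega)
  exact mul_ne_zero (mul_ne_zero h1 h2) h3
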